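/- Let c ∈ ℂ and R > 0. For w ∈ Metric.ball c R define Λ_w : C(Metric.sphere c R, ℂ) → ℂ by Λ_w(f) = (2πi)⁻¹ ∫_{θ ∈ [0, 2π]} f(c + R·e^{iθ}) · (c + R·e^{iθ} − w)⁻¹ · i·R·e^{iθ} dθ. Then each Λ_w is a bounded linear functional on C(Metric.sphere c R, ℂ), and the map w ↦ Λ_w from Metric.ball c R to the dual Banach space C(Metric.sphere c R, ℂ) →L[ℂ] ℂ (with the operator norm) is complex-analytic at every point of Metric.ball c R. -/

import Mathlib

open Complex Metric Real MeasureTheory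

namespace Stmt4Aux

variable (c : ℂ) (R : ℝ)

open scoped Classical in
noncomputable def gmap (f : C(Metric.sphere c R, ℂ)) (z : ℂ) : ℂ :=
  if h : z ∈ Metric.sphere c R then f ⟨z, h⟩ else 0

lemma gmap_circleMap (hR : 0 ≤ R) (f : C(Metric.sphere c R, ℂ)) (θ : ℝ) :
    gmap c R f (circleMap c R θ) = f ⟨circleMap c R θ, circleMap_mem_sphere c hR θ⟩ := by
  unfold gmap
  rw [dif_pos]

lemma continuous_gmap (hR : 0 ≤ R) (f : C(Metric.sphere c R, ℂ)) :
    Continuous fun θ : ℝ => gmap c R f (circleMap c R θ) := by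
  have : (fun θ : ℝ => gmap c R f (circleMap c R θ)) =
      fun θ : ℝ => f ⟨circleMap c R θ, circleMap_mem_sphere c hR θ⟩ := by
    funext θ; exact gmap_circleMap c R hR f θ
  rw [this]
  exact f.continuous.comp (Continuous.subtype_mk (continuous_circleMap c R) _)

lemma circleIntegrable_gmap (hR : 0 ≤ R) (f : C(Metric.sphere c R, ℂ)) :
    CircleIntegrable (gmap c R f) c R :=
  (continuous_gmap c R hR f).intervalIntegrable _ _

lemma circleIntegrable_kernel (hR : 0 < R) (n : ℕ) (f : C(Metric.sphere c R, ℂ)) :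
    CircleIntegrable (fun z => (z - c)⁻¹ ^ n • (z - c)⁻¹ • gmap c R f z) c R := by
  have hne : ∀ θ : ℝ, circleMap c R θ - c ≠ 0 := fun θ =>
    sub_ne_zero.mpr (circleMap_ne_center hR.ne')
  have hcont : Continuous fun θ : ℝ =>
      ((circleMap c R θ - c)⁻¹ ^ n • (circleMap c R θ - c)⁻¹ •
        gmap c R f (circleMap c R θ) : ℂ) :=
    ((((continuous_circleMap c R).sub continuous_const).inv₀ hne).pow n).smul
      ((((continuous_circleMap c R).sub continuous_const).inv₀ hne).smul
        (continuous_gmap c R hR.le f))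
  exact hcont.intervalIntegrable _ _

lemma circleIntegral_add {A B : ℂ → ℂ} (hA : CircleIntegrable A c R)
    (hB : CircleIntegrable B c R) :
    (∮ z in C(c, R), (A z + B z)) = (∮ z in C(c, R), A z) + ∮ z in C(c, R), B z := by
  simp only [circleIntegral, smul_add]
  exact intervalIntegral.integral_add hA.out hB.out

noncomputable def coeff (n : ℕ) (f : C(Metric.sphere c R, ℂ)) : ℂ :=
  (2 * ↑π * I : ℂ)⁻¹ • ∮ z in C(c, R), (z - c)⁻¹ ^ n • (z - c)⁻¹ • gmap c R f z

lemma gmap_add (f g : C(Metric.sphere c R, ℂ)) (z : ℂ) :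
    gmap c R (f + g) z = gmap c R f z + gmap c R g z := by
  unfold gmap; split <;> simp

lemma gmap_smul (a : ℂ) (f : C(Metric.sphere c R, ℂ)) (z : ℂ) :
    gmap c R (a • f) z = a * gmap c R f z := by
  unfold gmap; split <;> simp

lemma coeff_add (hR : 0 < R) (n : ℕ) (f g : C(Metric.sphere c R, ℂ)) :
    coeff c R n (f + g) = coeff c R n f + coeff c R n g := by
  unfold coeff
  rw [show (fun z => (z - c)⁻¹ ^ n • (z - c)⁻¹ • gmap c R (f + g) z) =
      fun z => ((z - c)⁻¹ ^ n • (z - c)⁻¹ • gmap c R f z) +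
        ((z - c)⁻¹ ^ n • (z - c)⁻¹ • gmap c R g z) by
    funext z; rw [gmap_add]; simp only [smul_eq_mul]; ring]
  rw [circleIntegral_add c R (circleIntegrable_kernel c R hR n f)
    (circleIntegrable_kernel c R hR n g), smul_add]

lemma coeff_smul (hR : 0 < R) (n : ℕ) (a : ℂ) (f : C(Metric.sphere c R, ℂ)) :
    coeff c R n (a • f) = a * coeff c R n f := by
  unfold coeff
  rw [show (fun z => (z - c)⁻¹ ^ n • (z - c)⁻¹ • gmap c R (a • f) z) =
      fun z => a • ((z - c)⁻¹ ^ n • (z - c)⁻¹ • gmap c R f z) by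
    funext z; rw [gmap_smul]; simp [smul_eq_mul]; ring]
  rw [circleIntegral.integral_smul]
  simp [smul_eq_mul]; ring

lemma norm_coeff_le (hR : 0 < R) (n : ℕ) (f : C(Metric.sphere c R, ℂ)) :
    ‖coeff c R n f‖ ≤ R⁻¹ ^ n * ‖f‖ := by
  have hbound : ∀ z ∈ Metric.sphere c R,
      ‖(z - c)⁻¹ ^ n • (z - c)⁻¹ • gmap c R f z‖ ≤ R⁻¹ ^ n * (R⁻¹ * ‖f‖) := by
    intro z hz
    have habs : ‖z - c‖ = R := by
      rw [← Complex.dist_eq]; exact hz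
    have hg : gmap c R f z = f ⟨z, hz⟩ := by unfold gmap; rw [dif_pos]
    rw [hg]
    simp only [norm_smul, norm_pow, norm_inv, habs]
    gcongr
    exact ContinuousMap.norm_coe_le_norm f _
  have hle := circleIntegral.norm_integral_le_of_norm_le_const (c := c) hR.le hbound
  have hnorm : ‖(2 * (π : ℂ) * I)⁻¹‖ = (2 * π)⁻¹ := by
    rw [norm_inv]
    simp [abs_of_pos Real.pi_pos]
  rw [coeff, norm_smul, hnorm]
  calc (2 * π)⁻¹ * ‖∮ z in C(c, R), (z - c)⁻¹ ^ n • (z - c)⁻¹ • gmap c R f z‖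
      ≤ (2 * π)⁻¹ * (2 * π * R * (R⁻¹ ^ n * (R⁻¹ * ‖f‖))) := by
        gcongr
    _ = R⁻¹ ^ n * ‖f‖ := by
        field_simp

noncomputable def lam (hR : 0 < R) (n : ℕ) : C(Metric.sphere c R, ℂ) →L[ℂ] ℂ :=
  LinearMap.mkContinuous
    { toFun := coeff c R n
      map_add' := coeff_add c R hR n
      map_smul' := coeff_smul c R hR n }
    (R⁻¹ ^ n) (norm_coeff_le c R hR n)

noncomputable def series (hR : 0 < R) :
    FormalMultilinearSeries ℂ ℂ (C(Metric.sphere c R, ℂ) →L[ℂ] ℂ) :=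
  fun n => ContinuousMultilinearMap.mkPiRing ℂ (Fin n) (lam c R hR n)

lemma norm_series_le (hR : 0 < R) (n : ℕ) : ‖series c R hR n‖ ≤ R⁻¹ ^ n := by
  rw [series, ContinuousMultilinearMap.norm_mkPiRing]
  exact LinearMap.mkContinuous_norm_le _ (by positivity) _

noncomputable def Lmap (hR : 0 < R) (w : ℂ) : C(Metric.sphere c R, ℂ) →L[ℂ] ℂ :=
  FormalMultilinearSeries.sum (𝕜 := ℂ) (E := ℂ)
    (F := C(Metric.sphere c R, ℂ) →L[ℂ] ℂ) (series c R hR) (w - c)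

lemma summable_series (hR : 0 < R) {y : ℂ} (hy : ‖y‖ < R) :
    Summable (fun n => series c R hR n fun _ => y) := by
  have hgeo : Summable fun n : ℕ => (‖y‖ / R) ^ n :=
    summable_geometric_of_lt_one (by positivity) (by rwa [div_lt_one hR])
  refine Summable.of_norm_bounded hgeo fun n => ?_
  calc ‖series c R hR n fun _ => y‖ ≤ ‖series c R hR n‖ * ‖y‖ ^ n := by
        simpa [Fin.prod_const] using (series c R hR n).le_opNorm fun _ => y
    _ ≤ R⁻¹ ^ n * ‖y‖ ^ n := by
        gcongr
        exact norm_series_le c R hR n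
    _ = (‖y‖ / R) ^ n := by
        rw [div_pow, div_eq_mul_inv, mul_comm, inv_pow]

lemma hasFPB (hR : 0 < R) :
    HasFPowerSeriesOnBall (Lmap c R hR) (series c R hR) c R.toNNReal := by
  constructor
  · apply FormalMultilinearSeries.le_radius_of_bound _ 1
    intro n
    have h1 : ‖series c R hR n‖ ≤ R⁻¹ ^ n := norm_series_le c R hR n
    have h2 : ((R.toNNReal : ℝ)) = R := Real.coe_toNNReal _ hR.le
    rw [h2]
    calc ‖series c R hR n‖ * R ^ n ≤ R⁻¹ ^ n * R ^ n := by gcongr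
      _ = 1 := by rw [← mul_pow, inv_mul_cancel₀ hR.ne', one_pow]
  · exact_mod_cast Real.toNNReal_pos.2 hR
  · intro y hy
    have hy' : ‖y‖ < R := by
      rw [EMetric.mem_ball, edist_zero_right, enorm_eq_nnnorm, ENNReal.coe_lt_coe, ← NNReal.coe_lt_coe,
        coe_nnnorm, Real.coe_toNNReal _ hR.le] at hy
      exact hy
    have hs := (summable_series c R hR hy').hasSum
    have hL : Lmap c R hR (c + y) = ∑' n, series c R hR n fun _ => y := by
      unfold Lmap
      rw [add_sub_cancel_left]
      rfl
    rw [hL]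
    exact hs

lemma series_apply (hR : 0 < R) (n : ℕ) (y : ℂ) (f : C(Metric.sphere c R, ℂ)) :
    (series c R hR n fun _ => y) f = cauchyPowerSeries (gmap c R f) c R n fun _ => y := by
  simp only [series, ContinuousMultilinearMap.mkPiRing_apply, cauchyPowerSeries,
    Finset.prod_const, smul_eq_mul, ContinuousLinearMap.smul_apply]
  rfl

lemma mem_eball {w : ℂ} (hR : 0 < R) (hw : w ∈ Metric.ball c R) :
    w ∈ Metric.eball c (R.toNNReal : ENNReal) := by
  rw [Metric.emetric_ball_nnreal, Real.coe_toNNReal _ hR.le]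
  exact hw

end Stmt4Aux

theorem stmt_4 (c : ℂ) (R : ℝ) (hR : 0 < R) :
    ∃ L : ℂ → (C(Metric.sphere c R, ℂ) →L[ℂ] ℂ),
      (∀ w ∈ Metric.ball c R, ∀ f : C(Metric.sphere c R, ℂ),
        L w f = (2 * (Real.pi : ℂ) * Complex.I)⁻¹ *
          ∫ θ in (0 : ℝ)..(2 * Real.pi),
            f ⟨c + (R : ℂ) * Complex.exp ((θ : ℂ) * Complex.I), by
              have habs : ‖(R : ℂ) * Complex.exp ((θ : ℂ) * Complex.I)‖ = R := by
                simp [abs_of_pos hR]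
              simp [Metric.mem_sphere, Complex.dist_eq, add_sub_cancel_left, habs, hR.le]⟩ *
              (c + (R : ℂ) * Complex.exp ((θ : ℂ) * Complex.I) - w)⁻¹ *
              (Complex.I * (R : ℂ) * Complex.exp ((θ : ℂ) * Complex.I))) ∧
      ∀ w ∈ Metric.ball c R, AnalyticAt ℂ L w := by
  have hFP := Stmt4Aux.hasFPB c R hR
  refine ⟨Stmt4Aux.Lmap c R hR, ?_, ?_⟩
  · intro w hw f
    have hwc : ‖w - c‖ < R := by
      rw [Metric.mem_ball, Complex.dist_eq] at hw; exact hw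
    have hint : CircleIntegrable (Stmt4Aux.gmap c R f) c R :=
      Stmt4Aux.circleIntegrable_gmap c R hR.le f
    have hymem : w - c ∈ Metric.eball (0 : ℂ) (R.toNNReal : ENNReal) := by
      rw [Metric.mem_eball, edist_zero_right, enorm_eq_nnnorm]
      exact_mod_cast ENNReal.coe_lt_coe.2 (by
        rw [← NNReal.coe_lt_coe, coe_nnnorm, Real.coe_toNNReal _ hR.le]
        exact hwc)
    have h2 := hFP.hasSum hymem
    rw [add_sub_cancel] at h2
    have h3 := h2.mapL (ContinuousLinearMap.apply ℂ ℂ f)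
    simp only [ContinuousLinearMap.apply_apply] at h3
    have h3' : HasSum (fun n => cauchyPowerSeries (Stmt4Aux.gmap c R f) c R n fun _ => w - c)
        (Stmt4Aux.Lmap c R hR w f) := by
      refine h3.congr_fun ?_
      intro n
      exact (Stmt4Aux.series_apply c R hR n (w - c) f)
    have h1 := hasSum_cauchyPowerSeries_integral hint hwc
    have key : Stmt4Aux.Lmap c R hR w f =
        (2 * ↑π * Complex.I : ℂ)⁻¹ •
          ∮ z in C(c, R), (z - w)⁻¹ • Stmt4Aux.gmap c R f z := by
      have := h3'.unique h1
      rwa [add_sub_cancel] at this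
    rw [key]
    simp only [circleIntegral, deriv_circleMap, smul_eq_mul]
    congr 1
    apply intervalIntegral.integral_congr
    intro θ _
    simp only [Stmt4Aux.gmap_circleMap c R hR.le f]
    simp only [circleMap, zero_add]
    ring
  · intro w hw
    exact hFP.analyticAt_of_mem (Stmt4Aux.mem_eball c R hR hw)
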